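/- If S ⊆ T are Cuntz semigroups (S a Cuntz subsemigroup of T, with the inherited order and suprema) such that S is countably based and T is algebraic, then there exists a countably based, algebraic Cuntz semigroup S' with S ⊆ S' ⊆ T, where the inclusion S' ↪ T preserves the Cuntz semigroup structure. -/

import Mathlib

/-- `x` is compactly contained in `y`: whenever an increasing sequence has a supremum
dominating `y`, some term dominates `x`. -/
def CC {M : Type*} [Preorder M] (x y : M) : Prop :=
  ∀ f : ℕ → M, Monotone f → ∀ s : M, IsLUB (Set.range f) s → y ≤ s → ∃ n, x ≤ f n

/-- An element is compact if it is compactly contained in itself. -/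
def IsCpt {M : Type*} [Preorder M] (x : M) : Prop := CC x x

/-- A Cuntz semigroup: a positively ordered monoid with suprema of increasing sequences,
rapidly increasing approximations, and additivity of suprema and of `CC`. -/
class CuSemigroup (S : Type*) extends AddCommMonoid S, PartialOrder S where
  add_le_add_left : ∀ a b : S, a ≤ b → ∀ c : S, c + a ≤ c + b
  zero_le' : ∀ x : S, 0 ≤ x
  seqSup : ∀ f : ℕ → S, Monotone f → ∃ s : S, IsLUB (Set.range f) s
  rapid : ∀ x : S, ∃ f : ℕ → S, Monotone f ∧ (∀ n, CC (f n) (f (n + 1))) ∧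
    IsLUB (Set.range f) x
  supAdd : ∀ f g : ℕ → S, Monotone f → Monotone g → ∀ a b : S, IsLUB (Set.range f) a →
    IsLUB (Set.range g) b → IsLUB (Set.range fun n => f n + g n) (a + b)
  ccAdd : ∀ x x' y y' : S, CC x x' → CC y y' → CC (x + y) (x' + y')

/-- A subset of a Cuntz semigroup which is a Cuntz subsemigroup: it contains `0`, is closed
under addition, and is closed under suprema of increasing sequences (so that the inclusion
preserves the Cuntz semigroup structure). -/
def IsSubCu {T : Type*} [CuSemigroup T] (P : Set T) : Prop :=
  (0 : T) ∈ P ∧ (∀ x ∈ P, ∀ y ∈ P, x + y ∈ P) ∧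
    ∀ f : ℕ → T, Monotone f → (∀ n, f n ∈ P) → ∀ s : T, IsLUB (Set.range f) s → s ∈ P

lemma isCpt_zero {T : Type*} [CuSemigroup T] : IsCpt (0 : T) := by
  intro f hf s hs h0
  exact ⟨0, CuSemigroup.zero_le' _⟩

lemma isCpt_add {T : Type*} [CuSemigroup T] {x y : T} (hx : IsCpt x) (hy : IsCpt y) :
    IsCpt (x + y) := CuSemigroup.ccAdd x x y y hx hy

/-- Extraction lemma: if `s` is the sup of an increasing sequence `u`, and each `u n` is the
sup of an increasing sequence of compact elements of `B'`, then `s` is the sup of an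
increasing sequence of elements of `B'`. -/
lemma extract {T : Type*} [CuSemigroup T] (B' : Set T)
    (hcpt : ∀ b ∈ B', IsCpt b)
    (u : ℕ → T) (hu : Monotone u) (s : T) (hs : IsLUB (Set.range u) s)
    (v : ℕ → ℕ → T) (hv : ∀ n, Monotone (v n)) (hvB : ∀ n k, v n k ∈ B')
    (hvu : ∀ n, IsLUB (Set.range (v n)) (u n)) :
    ∃ e : ℕ → T, Monotone e ∧ (∀ j, e j ∈ B') ∧ IsLUB (Set.range e) s := by
  classical
  have hvle : ∀ n k, v n k ≤ u n := fun n k => (hvu n).1 ⟨k, rfl⟩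
  -- the step
  have step : ∀ p : ℕ × ℕ, ∀ n k : ℕ, ∃ q : ℕ × ℕ,
      v p.1 p.2 ≤ v q.1 q.2 ∧ v n k ≤ v q.1 q.2 := by
    intro p n k
    set N := max p.1 n with hN
    have h1 : v p.1 p.2 ≤ u N := (hvle p.1 p.2).trans (hu (le_max_left _ _))
    have h2 : v n k ≤ u N := (hvle n k).trans (hu (le_max_right _ _))
    obtain ⟨a, ha⟩ := hcpt _ (hvB p.1 p.2) (v N) (hv N) (u N) (hvu N) h1
    obtain ⟨b, hb⟩ := hcpt _ (hvB n k) (v N) (hv N) (u N) (hvu N) h2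
    exact ⟨(N, max a b), ha.trans (hv N (le_max_left _ _)),
      hb.trans (hv N (le_max_right _ _))⟩
  -- enumeration of pairs
  obtain ⟨enc, henc⟩ : ∃ enc : ℕ → ℕ × ℕ, Function.Surjective enc :=
    ⟨fun j => ((Denumerable.eqv (ℕ × ℕ)).symm j), (Denumerable.eqv (ℕ × ℕ)).symm.surjective⟩
  -- the recursive sequence of indices
  let g : ℕ → ℕ × ℕ := fun j => Nat.rec ((0, 0) : ℕ × ℕ)
    (fun j p => (step p (enc j).1 (enc j).2).choose) j
  have hg : ∀ j, v (g j).1 (g j).2 ≤ v (g (j+1)).1 (g (j+1)).2 ∧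
      v (enc j).1 (enc j).2 ≤ v (g (j+1)).1 (g (j+1)).2 := fun j =>
    (step (g j) (enc j).1 (enc j).2).choose_spec
  refine ⟨fun j => v (g j).1 (g j).2, monotone_nat_of_le_succ (fun j => (hg j).1),
    fun j => hvB _ _, ?_, ?_⟩
  · rintro _ ⟨j, rfl⟩
    exact (hvle _ _).trans (hs.1 ⟨(g j).1, rfl⟩)
  · intro w hw
    refine hs.2 ?_
    rintro _ ⟨n, rfl⟩
    refine (hvu n).2 ?_
    rintro _ ⟨k, rfl⟩
    obtain ⟨j, hj⟩ := henc (n, k)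
    have := (hg j).2
    rw [hj] at this
    exact this.trans (hw ⟨j + 1, rfl⟩)

/-- If `S ⊆ T` are Cuntz semigroups with `S` countably based and `T` algebraic, there is a
countably based, algebraic Cuntz semigroup `S'` with `S ⊆ S' ⊆ T` (countably based and
algebraic being witnessed by a countable basis consisting of compact elements). -/
theorem stmt7 {T : Type*} [CuSemigroup T]
    (halg : ∀ x : T, ∃ f : ℕ → T, Monotone f ∧ (∀ n, IsCpt (f n)) ∧ IsLUB (Set.range f) x)
    (S : Set T) (hS : IsSubCu S)
    (B : Set T) (hBS : B ⊆ S) (hBc : B.Countable)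
    (hB : ∀ x ∈ S, ∃ f : ℕ → T, Monotone f ∧ (∀ n, f n ∈ B) ∧ IsLUB (Set.range f) x) :
    ∃ S' : Set T, S ⊆ S' ∧ IsSubCu S' ∧
      ∃ B' : Set T, B' ⊆ S' ∧ B'.Countable ∧ (∀ b ∈ B', IsCpt b) ∧
        ∀ x ∈ S', ∃ f : ℕ → T, Monotone f ∧ (∀ n, f n ∈ B') ∧ IsLUB (Set.range f) x := by
  classical
  -- choose compact approximations for every element of T
  let c : T → ℕ → T := fun x => (halg x).choose
  have hcmono : ∀ x : T, Monotone (c x) := fun x => (halg x).choose_spec.1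
  have hccpt : ∀ x : T, ∀ n, IsCpt (c x n) := fun x => (halg x).choose_spec.2.1
  have hclub : ∀ x : T, IsLUB (Set.range (c x)) x := fun x => (halg x).choose_spec.2.2
  -- the countable set of compacts approximating elements of B
  set B₀ : Set T := (⋃ b ∈ B, Set.range (c b)) ∪ {0} with hB₀def
  have hB₀c : B₀.Countable :=
    ((hBc.biUnion fun b _ => Set.countable_range _).union (Set.countable_singleton 0))
  have hB₀cpt : ∀ x ∈ B₀, IsCpt x := by
    rintro x (hx | hx)
    · simp only [Set.mem_iUnion] at hx
      obtain ⟨b, _, n, rfl⟩ := hx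
      exact hccpt b n
    · rw [Set.mem_singleton_iff] at hx; subst hx; exact isCpt_zero
  have hB₀ne : B₀.Nonempty := ⟨0, Or.inr rfl⟩
  obtain ⟨gen, hgen⟩ := hB₀c.exists_eq_range hB₀ne
  -- B' : finite sums of elements of B₀
  set B' : Set T := Set.range (fun l : List ℕ => (l.map gen).sum) with hB'def
  have hB'c : B'.Countable := Set.countable_range _
  have hgenB₀ : ∀ n, gen n ∈ B₀ := fun n => hgen ▸ ⟨n, rfl⟩
  have hB'cpt : ∀ b ∈ B', IsCpt b := by
    rintro _ ⟨l, rfl⟩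
    induction l with
    | nil => exact isCpt_zero
    | cons a l ih =>
      simp only [List.map_cons, List.sum_cons]
      exact isCpt_add (hB₀cpt _ (hgenB₀ a)) ih
  have hB'zero : (0 : T) ∈ B' := ⟨[], rfl⟩
  have hB'add : ∀ x ∈ B', ∀ y ∈ B', x + y ∈ B' := by
    rintro _ ⟨l, rfl⟩ _ ⟨m, rfl⟩
    exact ⟨l ++ m, by simp⟩
  have hB₀B' : B₀ ⊆ B' := by
    intro x hx
    rw [hgen] at hx
    obtain ⟨n, rfl⟩ := hx
    exact ⟨[n], by simp⟩
  -- S' : suprema of increasing sequences from B'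
  set S' : Set T := {s | ∃ e : ℕ → T, Monotone e ∧ (∀ j, e j ∈ B') ∧ IsLUB (Set.range e) s}
    with hS'def
  have hSsub : S ⊆ S' := by
    intro x hx
    obtain ⟨f, hf, hfB, hfx⟩ := hB x hx
    exact extract B' hB'cpt f hf x hfx (fun n => c (f n)) (fun n => hcmono (f n))
      (fun n k => hB₀B' (Or.inl (Set.mem_biUnion (hfB n) ⟨k, rfl⟩)))
      (fun n => hclub (f n))
  refine ⟨S', hSsub, ⟨⟨fun _ => 0, monotone_const, fun _ => hB'zero, ?_⟩, ?_, ?_⟩,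
    B', ?_, hB'c, hB'cpt, fun x hx => hx⟩
  · constructor
    · rintro _ ⟨n, rfl⟩; exact le_refl _
    · intro w hw; exact hw ⟨0, rfl⟩
  · rintro x ⟨e, he, heB, hex⟩ y ⟨d, hd, hdB, hdy⟩
    exact ⟨fun n => e n + d n, fun a b hab => by
        have h1 := CuSemigroup.add_le_add_left _ _ (he hab) (d a)
        have h2 := CuSemigroup.add_le_add_left _ _ (hd hab) (e b)
        rw [add_comm (d a), add_comm (d a)] at h1
        exact h1.trans h2,
      fun n => hB'add _ (heB n) _ (hdB n),
      CuSemigroup.supAdd e d he hd x y hex hdy⟩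
  · intro f hf hfS' s hsf
    choose v hvmono hvB hvlub using hfS'
    exact extract B' hB'cpt f hf s hsf v hvmono hvB hvlub
  · -- B' ⊆ S'
    intro b hb
    refine ⟨fun _ => b, monotone_const, fun _ => hb, ?_, fun w hw => hw ⟨0, rfl⟩⟩
    rintro _ ⟨n, rfl⟩; exact le_refl _
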